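/- Let ρ be a permutation of ℕ with unbounded finite cycle lengths, and let C_ρ be the closure of its conjugacy class in Sym(ℕ). Then for each c ∈ ℕ, the set of δ ∈ C_ρ such that c lies in a finite cycle of δ is dense and open in C_ρ; consequently the set of permutations in C_ρ with no infinite cycles is comeagre in C_ρ. -/

import Mathlib

/-- The cycle (orbit) of `x` under the permutation `γ`. -/
def orbitOf (γ : Equiv.Perm ℕ) (x : ℕ) : Set ℕ := {y | ∃ k : ℤ, (γ ^ k) x = y}

/-- The pointwise convergence topology on `Sym(ℕ)`. -/
instance : TopologicalSpace (Equiv.Perm ℕ) :=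
  TopologicalSpace.induced (fun g : Equiv.Perm ℕ => (⇑g, ⇑g.symm)) inferInstance

/-- The closure of the conjugacy class of `ρ`. -/
def Crho (ρ : Equiv.Perm ℕ) : Set (Equiv.Perm ℕ) :=
  closure {g : Equiv.Perm ℕ | IsConj ρ g}

open Equiv Set Function

namespace Stmt17Aux


lemma mem_orbit_self (ρ : Perm ℕ) (x : ℕ) : x ∈ orbitOf ρ x := ⟨0, rfl⟩

lemma apply_mem_orbit (ρ : Perm ℕ) (x : ℕ) : ρ x ∈ orbitOf ρ x := ⟨1, by simp⟩

lemma mem_orbit_apply (ρ : Perm ℕ) (x : ℕ) : x ∈ orbitOf ρ (ρ x) :=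
  ⟨-1, by simp⟩

lemma orbit_eq_of_mem {ρ : Perm ℕ} {x y : ℕ} (h : y ∈ orbitOf ρ x) :
    orbitOf ρ y = orbitOf ρ x := by
  obtain ⟨k, rfl⟩ := h
  ext z
  constructor
  · rintro ⟨j, rfl⟩
    exact ⟨j + k, by rw [zpow_add, Equiv.Perm.mul_apply]⟩
  · rintro ⟨j, rfl⟩
    refine ⟨j - k, ?_⟩
    rw [← Equiv.Perm.mul_apply, ← zpow_add, sub_add_cancel]

lemma orbit_conj (σ ρ : Perm ℕ) (x : ℕ) :
    orbitOf (σ * ρ * σ⁻¹) (σ x) = σ '' orbitOf ρ x := by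
  ext y
  constructor
  · rintro ⟨k, rfl⟩
    refine ⟨(ρ ^ k) x, ⟨k, rfl⟩, ?_⟩
    rw [conj_zpow]
    simp [Equiv.Perm.mul_apply]
  · rintro ⟨z, ⟨k, rfl⟩, rfl⟩
    refine ⟨k, ?_⟩
    rw [conj_zpow]
    simp [Equiv.Perm.mul_apply]

lemma orbit_subset_of_period {ρ : Perm ℕ} {x : ℕ} {p : ℕ} (hp : 0 < p)
    (h : (ρ ^ p) x = x) :
    orbitOf ρ x ⊆ (fun i : ℕ => (ρ ^ (i : ℤ)) x) '' (Set.Iio p) := by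
  rintro _ ⟨k, rfl⟩
  have hp' : (p : ℤ) ≠ 0 := by exact_mod_cast hp.ne'
  refine ⟨(k % p).toNat, ?_, ?_⟩
  · have h1 : 0 ≤ k % (p : ℤ) := Int.emod_nonneg k hp'
    have h2 : k % (p : ℤ) < p := Int.emod_lt_of_pos k (by exact_mod_cast hp)
    simp only [Set.mem_Iio]
    omega
  · have h1 : 0 ≤ k % (p : ℤ) := Int.emod_nonneg k hp'
    have hx : (ρ ^ ((p : ℤ) * (k / p))) x = x := by
      rw [zpow_mul]
      exact Equiv.Perm.zpow_apply_eq_self_of_apply_eq_self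
        (by rw [zpow_natCast]; exact h) _
    have hk : k % (p : ℤ) + (p : ℤ) * (k / (p : ℤ)) = k := Int.emod_add_mul_ediv k p
    have hval : (ρ ^ k) x = (ρ ^ (k % (p : ℤ))) x := by
      conv_lhs => rw [← hk]
      rw [zpow_add, Equiv.Perm.mul_apply, hx]
    show (ρ ^ (((k % (p : ℤ)).toNat : ℕ) : ℤ)) x = (ρ ^ k) x
    rw [Int.toNat_of_nonneg h1, hval]

lemma orbit_finite_of_period {ρ : Perm ℕ} {x : ℕ} {p : ℕ} (hp : 0 < p)
    (h : (ρ ^ p) x = x) : (orbitOf ρ x).Finite :=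
  Set.Finite.subset ((Set.finite_Iio p).image _) (orbit_subset_of_period hp h)

lemma orbit_ncard_le_of_period {ρ : Perm ℕ} {x : ℕ} {p : ℕ} (hp : 0 < p)
    (h : (ρ ^ p) x = x) : (orbitOf ρ x).ncard ≤ p := by
  calc (orbitOf ρ x).ncard
      ≤ ((fun i : ℕ => (ρ ^ (i : ℤ)) x) '' (Set.Iio p)).ncard :=
        Set.ncard_le_ncard (orbit_subset_of_period hp h) ((Set.finite_Iio p).image _)
    _ ≤ (Set.Iio p).ncard := Set.ncard_image_le (Set.finite_Iio p)
    _ = p := by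
        simp [Set.ncard_eq_toFinset_card', Set.toFinset_Iio]

lemma exists_period_of_finite {ρ : Perm ℕ} {c : ℕ} (h : (orbitOf ρ c).Finite) :
    ∃ p : ℕ, 0 < p ∧ (ρ ^ p) c = c := by
  by_contra hcon
  push_neg at hcon
  have hinj : Function.Injective (fun i : ℕ => (ρ ^ i) c) := by
    intro a b hab
    by_contra hne
    wlog hlt : a < b generalizing a b
    · exact this hab.symm (Ne.symm hne) (by omega)
    have : (ρ ^ (b - a)) c = c := by
      have := hab
      simp only at this
      have h2 : (ρ ^ a) ((ρ ^ (b - a)) c) = (ρ ^ a) c := by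
        rw [← Equiv.Perm.mul_apply, ← pow_add]
        rw [show a + (b - a) = b by omega]
        exact this.symm
      exact (Equiv.injective _) h2
    exact hcon (b - a) (by omega) this
  have : (Set.range fun i : ℕ => (ρ ^ i) c).Infinite :=
    Set.infinite_range_of_injective hinj
  have hsub : (Set.range fun i : ℕ => (ρ ^ i) c) ⊆ orbitOf ρ c := by
    rintro _ ⟨i, rfl⟩
    exact ⟨(i : ℤ), by rw [zpow_natCast]⟩
  exact this (h.subset hsub)


variable (e : ℤ → ℕ) (d : ℕ → ℕ) (n : ℕ)

/-- product of the swaps `(e (i - n), d i)` for `i < N`. -/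
def sProd (N : ℕ) : Perm ℕ :=
  ((List.range N).map (fun (i : ℕ) => Equiv.swap (e ((i : ℤ) - (n : ℤ))) (d i))).prod

lemma sProd_succ (N : ℕ) :
    sProd e d n (N + 1) = sProd e d n N * Equiv.swap (e ((N : ℤ) - (n : ℤ))) (d N) := by
  unfold sProd
  rw [List.range_succ, List.map_append, List.prod_append]
  simp

lemma sProd_fix {N : ℕ} {z : ℕ}
    (h : ∀ i, i < N → z ≠ e ((i : ℤ) - (n : ℤ)) ∧ z ≠ d i) :
    sProd e d n N z = z := by
  induction N with
  | zero => rfl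
  | succ N ih =>
    rw [sProd_succ, Equiv.Perm.mul_apply,
      Equiv.swap_apply_of_ne_of_ne (h N (Nat.lt_succ_self N)).1 (h N (Nat.lt_succ_self N)).2]
    exact ih (fun i hi => h i (hi.trans (Nat.lt_succ_self N)))

lemma sProd_apply_e {N : ℕ} (hinj : Function.Injective e)
    (hed : ∀ i j, i < N → j < N → e ((i : ℤ) - (n : ℤ)) ≠ d j)
    (hd : ∀ i j, i < N → j < N → i ≠ j → d i ≠ d j)
    {i : ℕ} (hi : i < N) :
    sProd e d n N (e ((i : ℤ) - (n : ℤ))) = d i := by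
  induction N with
  | zero => omega
  | succ N ih =>
    rw [sProd_succ, Equiv.Perm.mul_apply]
    rcases Nat.lt_succ_iff_lt_or_eq.mp hi with hlt | rfl
    · rw [Equiv.swap_apply_of_ne_of_ne]
      · exact ih (fun a b ha hb => hed a b (ha.trans (Nat.lt_succ_self N)) (hb.trans (Nat.lt_succ_self N)))
          (fun a b ha hb => hd a b (ha.trans (Nat.lt_succ_self N)) (hb.trans (Nat.lt_succ_self N))) hlt
      · intro hcon
        have := hinj hcon
        omega
      · exact hed i N hi (Nat.lt_succ_self N)
    · rw [Equiv.swap_apply_left]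
      exact sProd_fix e d n (fun j hj =>
        ⟨fun hc => hed j i (hj.trans (Nat.lt_succ_self i)) hi hc.symm,
         fun hc => hd i j hi (hj.trans (Nat.lt_succ_self i)) (by omega) hc⟩)

lemma sProd_apply_d {N : ℕ} (hinj : Function.Injective e)
    (hed : ∀ i j, i < N → j < N → e ((i : ℤ) - (n : ℤ)) ≠ d j)
    (hd : ∀ i j, i < N → j < N → i ≠ j → d i ≠ d j)
    {i : ℕ} (hi : i < N) :
    sProd e d n N (d i) = e ((i : ℤ) - (n : ℤ)) := by
  induction N with
  | zero => omega
  | succ N ih =>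
    rw [sProd_succ, Equiv.Perm.mul_apply]
    rcases Nat.lt_succ_iff_lt_or_eq.mp hi with hlt | rfl
    · rw [Equiv.swap_apply_of_ne_of_ne]
      · exact ih (fun a b ha hb => hed a b (ha.trans (Nat.lt_succ_self N)) (hb.trans (Nat.lt_succ_self N)))
          (fun a b ha hb => hd a b (ha.trans (Nat.lt_succ_self N)) (hb.trans (Nat.lt_succ_self N))) hlt
      · exact fun hc => hed N i (Nat.lt_succ_self N) (hlt.trans (Nat.lt_succ_self N)) hc.symm
      · exact hd i N hi (Nat.lt_succ_self N) (by omega)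
    · rw [Equiv.swap_apply_right]
      exact sProd_fix e d n (fun j hj =>
        ⟨fun hc => (by have := hinj hc; omega),
         fun hc => hed i j hi (hj.trans (Nat.lt_succ_self i)) hc⟩)


lemma inj_of_orbit_infinite {ρ : Perm ℕ} {c : ℕ} (h : ¬ (orbitOf ρ c).Finite) :
    Function.Injective (fun k : ℤ => (ρ ^ k) c) := by
  intro a b hab
  by_contra hne
  simp only at hab
  have hfix : (ρ ^ (a - b)) c = c := by
    have h1 : (ρ ^ (-b + a)) c = (ρ ^ (-b + b)) c := by
      rw [zpow_add, zpow_add, Equiv.Perm.mul_apply, Equiv.Perm.mul_apply, hab]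
    rw [neg_add_cancel, zpow_zero, Equiv.Perm.one_apply] at h1
    rw [show a - b = -b + a by ring]
    exact h1
  set t : ℤ := a - b with ht
  have ht0 : t ≠ 0 := sub_ne_zero.mpr hne
  have hv : (ρ ^ t.natAbs) c = c := by
    rcases Int.natAbs_eq t with heq | heq
    · rw [← zpow_natCast, ← heq]; exact hfix
    · have h2 : (ρ ^ ((t.natAbs : ℤ))) ((ρ ^ t) c) = (ρ ^ ((t.natAbs : ℤ) + t)) c := by
        rw [zpow_add, Equiv.Perm.mul_apply]
      rw [hfix, show (t.natAbs : ℤ) + t = 0 by omega, zpow_zero, Equiv.Perm.one_apply] at h2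
      rw [← zpow_natCast]
      exact h2
  exact h (orbit_finite_of_period (Int.natAbs_pos.mpr ht0) hv)




lemma continuous_eval (a : ℕ) : Continuous (fun δ : Perm ℕ => δ a) := by
  have h1 : Continuous (fun g : Perm ℕ => (⇑g, ⇑g.symm)) := continuous_induced_dom
  exact (continuous_apply a).comp (continuous_fst.comp h1)

lemma isOpen_eval (a b : ℕ) : IsOpen {δ : Perm ℕ | δ a = b} := by
  have h : {δ : Perm ℕ | δ a = b} = (fun δ : Perm ℕ => δ a) ⁻¹' {b} := by
    ext δ; simp
  rw [h]
  exact (isOpen_discrete _).preimage (continuous_eval a)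

lemma isOpen_finiteOrbit (c : ℕ) : IsOpen {δ : Perm ℕ | (orbitOf δ c).Finite} := by
  rw [isOpen_iff_forall_mem_open]
  intro δ₀ h₀
  obtain ⟨p, hp, hper⟩ := exists_period_of_finite h₀
  refine ⟨⋂ i ∈ Finset.range p, {δ : Perm ℕ | δ ((δ₀ ^ i) c) = (δ₀ ^ (i + 1)) c},
    ?_, isOpen_biInter_finset (fun i _ => isOpen_eval _ _), ?_⟩
  · intro δ hδ
    simp only [Set.mem_iInter, Finset.mem_range, Set.mem_setOf_eq] at hδ
    have hagree : ∀ i, i ≤ p → (δ ^ i) c = (δ₀ ^ i) c := by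
      intro i hi
      induction i with
      | zero => rfl
      | succ i ih =>
        rw [pow_succ', Equiv.Perm.mul_apply, ih (by omega), hδ i (by omega)]
    exact orbit_finite_of_period hp (by rw [hagree p le_rfl, hper])
  · simp only [Set.mem_iInter, Finset.mem_range, Set.mem_setOf_eq]
    intro i _
    rw [pow_succ', Equiv.Perm.mul_apply]

lemma nbhd_basis {V : Set (Perm ℕ)} (hV : IsOpen V) {γ : Perm ℕ} (hγ : γ ∈ V) :
    ∃ G : Set ℕ, G.Finite ∧ ∀ π : Perm ℕ, (∀ y ∈ G, π y = γ y) → π ∈ V := by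
  obtain ⟨W, hW, hWV⟩ := isOpen_induced_iff.mp hV
  have hγW : ((⇑γ, ⇑γ.symm) : (ℕ → ℕ) × (ℕ → ℕ)) ∈ W := by
    rw [← hWV] at hγ; exact hγ
  obtain ⟨A, B, hA, hB, hγA, hγB, hAB⟩ := isOpen_prod_iff.mp hW _ _ hγW
  obtain ⟨I, u, hu, hIA⟩ := isOpen_pi_iff.mp hA _ hγA
  obtain ⟨J, v, hv, hJB⟩ := isOpen_pi_iff.mp hB _ hγB
  refine ⟨(I : Set ℕ) ∪ (fun y => γ.symm y) '' (J : Set ℕ),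
    (I.finite_toSet.union (J.finite_toSet.image _)), ?_⟩
  intro π hπ
  have h1 : ⇑π ∈ (I : Set ℕ).pi u := by
    intro a ha
    rw [hπ a (Set.mem_union_left _ ha)]
    exact (hu a ha).2
  have h2 : ⇑π.symm ∈ (J : Set ℕ).pi v := by
    intro b hb
    have hπb : π (γ.symm b) = γ (γ.symm b) :=
      hπ _ (Set.mem_union_right _ (Set.mem_image_of_mem _ hb))
    rw [Equiv.apply_symm_apply] at hπb
    have heq : π.symm b = γ.symm b := by
      nth_rewrite 1 [← hπb]
      rw [Equiv.symm_apply_apply]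
    rw [heq]
    exact (hv b hb).2
  rw [← hWV]
  exact hAB ⟨hIA h1, hJB h2⟩






lemma key (ρ : Perm ℕ)
    (hub : ∀ n : ℕ, ∃ x : ℕ, (orbitOf ρ x).Finite ∧ n < (orbitOf ρ x).ncard)
    (c : ℕ) (G : Set ℕ) (hG : G.Finite) :
    ∃ π : Perm ℕ, IsConj ρ π ∧ (∀ y ∈ G, π y = ρ y) ∧ (orbitOf π c).Finite := by
  classical
  by_cases hfin : (orbitOf ρ c).Finite
  · exact ⟨ρ, IsConj.refl ρ, fun _ _ => rfl, hfin⟩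
  set e : ℤ → ℕ := fun k => (ρ ^ k) c with he_def
  have he : Function.Injective e := inj_of_orbit_infinite hfin
  have heO : ∀ k : ℤ, e k ∈ orbitOf ρ c := fun k => ⟨k, rfl⟩
  have heρ : ∀ k : ℤ, ρ (e k) = e (k + 1) := by
    intro k
    show ρ ((ρ ^ k) c) = (ρ ^ (k + 1)) c
    rw [add_comm, zpow_one_add, Equiv.Perm.mul_apply]
  -- choose the window size n
  have hpre : (e ⁻¹' G).Finite := Set.Finite.preimage (Set.injOn_of_injective he) hG
  obtain ⟨n0, hn0⟩ : ∃ n0 : ℕ, ∀ k ∈ e ⁻¹' G, k.natAbs < n0 := by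
    obtain ⟨m, hm⟩ := (hpre.image (fun k : ℤ => k.natAbs)).bddAbove
    exact ⟨m + 1, fun k hk => by
      have := hm (Set.mem_image_of_mem _ hk); omega⟩
  set n : ℕ := n0 + 1 with hn_def
  have hn : ∀ k : ℤ, e k ∈ G → k.natAbs < n := fun k hk => (hn0 k hk).trans (by omega)
  -- choose the long finite cycle C
  set B : Set ℕ := ⋃ g ∈ G, (if (orbitOf ρ g).Finite then orbitOf ρ g else ∅) with hB_def
  have hBfin : B.Finite :=
    Set.Finite.biUnion hG (fun g _ => by split_ifs with h; exacts [h, Set.finite_empty])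
  obtain ⟨x, hxfin, hxcard⟩ := hub (max (2 * n + 1) B.ncard)
  have hx1 : 2 * n + 1 < (orbitOf ρ x).ncard := lt_of_le_of_lt (le_max_left _ _) hxcard
  have hx2 : B.ncard < (orbitOf ρ x).ncard := lt_of_le_of_lt (le_max_right _ _) hxcard
  have hCG : ∀ z ∈ orbitOf ρ x, z ∉ G := by
    intro z hz hzG
    have h1 : orbitOf ρ z = orbitOf ρ x := orbit_eq_of_mem hz
    have hsub : orbitOf ρ x ⊆ B := by
      intro w hw
      refine Set.mem_biUnion hzG ?_
      rw [if_pos (h1 ▸ hxfin), h1]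
      exact hw
    have := Set.ncard_le_ncard hsub hBfin
    omega
  have hCO : ∀ z, z ∈ orbitOf ρ x → z ∉ orbitOf ρ c := by
    intro z hz hzO
    have h1 : orbitOf ρ z = orbitOf ρ x := orbit_eq_of_mem hz
    have h2 : orbitOf ρ z = orbitOf ρ c := orbit_eq_of_mem hzO
    rw [h1] at h2
    exact hfin (h2 ▸ hxfin)
  set d : ℕ → ℕ := fun i => (ρ ^ (i : ℤ)) x with hd_def
  have hdC : ∀ i : ℕ, d i ∈ orbitOf ρ x := fun i => ⟨(i : ℤ), rfl⟩
  have hdρ : ∀ i : ℕ, ρ (d i) = d (i + 1) := by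
    intro i
    show ρ ((ρ ^ (i : ℤ)) x) = (ρ ^ ((i + 1 : ℕ) : ℤ)) x
    rw [show ((i + 1 : ℕ) : ℤ) = 1 + (i : ℤ) by omega, zpow_one_add, Equiv.Perm.mul_apply]
  have hdinj : ∀ i j, i ≤ 2 * n + 1 → j ≤ 2 * n + 1 → i ≠ j → d i ≠ d j := by
    intro i j hi hj hne hc
    wlog hlt : i < j generalizing i j
    · exact this j i hj hi hne.symm hc.symm (by omega)
    have hfix : (ρ ^ ((j : ℤ) - i)) x = x := by
      have h1 : (ρ ^ (-(i : ℤ))) ((ρ ^ (i : ℤ)) x) = (ρ ^ (-(i : ℤ))) ((ρ ^ (j : ℤ)) x) := by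
        rw [show ((ρ ^ (i : ℤ)) x) = ((ρ ^ (j : ℤ)) x) from hc]
      rw [← Equiv.Perm.mul_apply, ← Equiv.Perm.mul_apply, ← zpow_add, ← zpow_add,
        neg_add_cancel, zpow_zero] at h1
      rw [show (j : ℤ) - i = -(i : ℤ) + j by ring]
      exact ((Equiv.Perm.one_apply x) ▸ h1).symm
    have hnat : (ρ ^ (j - i)) x = x := by
      rw [← zpow_natCast, show ((j - i : ℕ) : ℤ) = (j : ℤ) - i by omega]
      exact hfix
    have := orbit_ncard_le_of_period (p := j - i) (by omega) hnat
    omega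
  set N : ℕ := 2 * n + 1 with hN_def
  have hed : ∀ i j, i < N → j < N → e ((i : ℤ) - (n : ℤ)) ≠ d j :=
    fun i j _ _ hc => hCO (d j) (hdC j) (hc ▸ heO _)
  have hd' : ∀ i j, i < N → j < N → i ≠ j → d i ≠ d j :=
    fun i j hi hj => hdinj i j (by omega) (by omega)
  set s : Perm ℕ := sProd e d n N with hs_def
  have hsE : ∀ {i : ℕ}, i < N → s (e ((i : ℤ) - (n : ℤ))) = d i :=
    fun {i} hi => sProd_apply_e e d n he hed hd' hi
  have hsD : ∀ {i : ℕ}, i < N → s (d i) = e ((i : ℤ) - (n : ℤ)) :=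
    fun {i} hi => sProd_apply_d e d n he hed hd' hi
  have hsFix : ∀ z, z ∉ orbitOf ρ c → z ∉ orbitOf ρ x → s z = z :=
    fun z hzO hzC => sProd_fix e d n
      (fun i _ => ⟨fun h => hzO (h ▸ heO _), fun h => hzC (h ▸ hdC _)⟩)
  refine ⟨s * ρ * s⁻¹, isConj_iff.mpr ⟨s, rfl⟩, ?_, ?_⟩
  · -- agreement on G
    intro y hy
    by_cases hyO : y ∈ orbitOf ρ c
    · obtain ⟨k, hk⟩ := hyO
      have hek : e k = y := hk
      have hkn : k.natAbs < n := hn k (hek ▸ hy)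
      set i : ℕ := (k + n).toNat with hi_def
      have hiz : (i : ℤ) = k + n := Int.toNat_of_nonneg (by omega)
      have hi1 : i < N := by omega
      have hi2 : i + 1 < N := by omega
      have h1 : s (d i) = y := by
        rw [hsD hi1, show (i : ℤ) - n = k by omega]
        exact hek
      have h2 : s⁻¹ y = d i := by rw [← h1]; exact Equiv.symm_apply_apply s (d i)
      show s (ρ (s⁻¹ y)) = ρ y
      rw [h2, hdρ i, hsD hi2, show ((i + 1 : ℕ) : ℤ) - n = k + 1 by omega, ← heρ k, hek]
    · have hyC : y ∉ orbitOf ρ x := fun h => hCG y h hy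
      have hρyO : ρ y ∉ orbitOf ρ c := by
        intro h
        exact hyO ((orbit_eq_of_mem h) ▸ mem_orbit_apply ρ y)
      have hρyC : ρ y ∉ orbitOf ρ x := by
        intro h
        exact hyC ((orbit_eq_of_mem h) ▸ mem_orbit_apply ρ y)
      have h2 : s⁻¹ y = y := by
        conv_lhs => rw [← hsFix y hyO hyC]
        exact Equiv.symm_apply_apply s y
      show s (ρ (s⁻¹ y)) = ρ y
      rw [h2, hsFix (ρ y) hρyO hρyC]
  · -- finiteness of the orbit of c
    have hc0 : s (d n) = c := by
      rw [hsD (by omega), show (n : ℤ) - n = (0 : ℤ) by ring]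
      show (ρ ^ (0 : ℤ)) c = c
      simp
    have horb : orbitOf (s * ρ * s⁻¹) c = s '' orbitOf ρ (d n) := by
      rw [← hc0]
      exact orbit_conj s ρ (d n)
    rw [horb, orbit_eq_of_mem (hdC n)]
    exact hxfin.image s


lemma hub_conj {ρ γ : Perm ℕ} (h : IsConj ρ γ)
    (hub : ∀ n : ℕ, ∃ x : ℕ, (orbitOf ρ x).Finite ∧ n < (orbitOf ρ x).ncard) :
    ∀ n : ℕ, ∃ x : ℕ, (orbitOf γ x).Finite ∧ n < (orbitOf γ x).ncard := by
  obtain ⟨σ, rfl⟩ := isConj_iff.mp h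
  intro n
  obtain ⟨x, hf, hc⟩ := hub n
  refine ⟨σ x, ?_, ?_⟩
  · rw [orbit_conj]; exact hf.image σ
  · rw [orbit_conj, Set.ncard_image_of_injective _ σ.injective]; exact hc

lemma main_part (ρ : Perm ℕ)
    (hub : ∀ n : ℕ, ∃ x : ℕ, (orbitOf ρ x).Finite ∧ n < (orbitOf ρ x).ncard)
    (c : ℕ) :
    IsOpen {δ : ↥(Crho ρ) | (orbitOf (δ : Equiv.Perm ℕ) c).Finite} ∧
      Dense {δ : ↥(Crho ρ) | (orbitOf (δ : Equiv.Perm ℕ) c).Finite} := by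
  constructor
  · exact (isOpen_finiteOrbit c).preimage continuous_subtype_val
  · rw [dense_iff_inter_open]
    rintro U hU hUne
    obtain ⟨V, hV, rfl⟩ := isOpen_induced_iff.mp hU
    obtain ⟨δ, hδ⟩ := hUne
    have hδV : (δ : Perm ℕ) ∈ V := hδ
    have hδC : (δ : Perm ℕ) ∈ closure {g : Perm ℕ | IsConj ρ g} := δ.2
    obtain ⟨γ, hγV, hγconj⟩ := mem_closure_iff.mp hδC V hV hδV
    obtain ⟨G, hGfin, hGV⟩ := nbhd_basis hV hγV
    obtain ⟨π, hπconj, hπG, hπfin⟩ := key γ (hub_conj hγconj hub) c G hGfin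
    have hπC : π ∈ Crho ρ := subset_closure (hγconj.trans hπconj)
    exact ⟨⟨π, hπC⟩, hGV π hπG, hπfin⟩

end Stmt17Aux

open Stmt17Aux

/-- if `ρ` has finite cycles of unbounded length, then for each
`c ∈ ℕ` the set of `δ ∈ C_ρ` with `c` in a finite cycle of `δ` is dense open in
`C_ρ`, and the set of `δ ∈ C_ρ` with no infinite cycle is comeagre in `C_ρ`. -/
theorem stmt17 (ρ : Equiv.Perm ℕ)
    (hub : ∀ n : ℕ, ∃ x : ℕ, (orbitOf ρ x).Finite ∧ n < (orbitOf ρ x).ncard) :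
    (∀ c : ℕ,
      IsOpen {δ : ↥(Crho ρ) | (orbitOf (δ : Equiv.Perm ℕ) c).Finite} ∧
      Dense {δ : ↥(Crho ρ) | (orbitOf (δ : Equiv.Perm ℕ) c).Finite}) ∧
    {δ : ↥(Crho ρ) | ∀ x : ℕ, (orbitOf (δ : Equiv.Perm ℕ) x).Finite} ∈
      residual ↥(Crho ρ) := by
  refine ⟨main_part ρ hub, ?_⟩
  have heq : {δ : ↥(Crho ρ) | ∀ x : ℕ, (orbitOf (δ : Equiv.Perm ℕ) x).Finite}
      = ⋂ x : ℕ, {δ : ↥(Crho ρ) | (orbitOf (δ : Equiv.Perm ℕ) x).Finite} := by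
    ext δ; simp [Set.mem_iInter]
  rw [heq, countable_iInter_mem]
  intro x
  exact residual_of_dense_open (main_part ρ hub x).1 (main_part ρ hub x).2
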